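/- Let Σ_x be a k×k positive definite matrix, δ ∈ ℝ^k, σ_e² > 0, and c₂ ∈ ℝ. The (k+2)×(k+2) block matrix M = [[Σ_x, Σ_x δ, 0],[δ'Σ_x, δ'Σ_x δ + σ_e², c₂],[0, c₂, 1]] is invertible if and only if c₂² ≠ σ_e². -/
import Mathlib

open Matrix

/-- The (k+2)×(k+2) matrix `M = [[Σₓ, Σₓδ, 0],[δ'Σₓ, δ'Σₓδ + σ_e², c₂],[0, c₂, 1]]`
from Proposition 3.1, indexed by `Fin k ⊕ Fin 2`. -/
noncomputable def Mmat {k : ℕ} (S : Matrix (Fin k) (Fin k) ℝ) (δ : Fin k → ℝ)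
    (σe2 c2 : ℝ) : Matrix (Fin k ⊕ Fin 2) (Fin k ⊕ Fin 2) ℝ :=
  Matrix.of fun i j =>
    match i, j with
    | Sum.inl a, Sum.inl b => S a b
    | Sum.inl a, Sum.inr b => if b = 0 then S.mulVec δ a else 0
    | Sum.inr a, Sum.inl b => if a = 0 then Matrix.vecMul δ S b else 0
    | Sum.inr a, Sum.inr b =>
      if a = 0 ∧ b = 0 then δ ⬝ᵥ S.mulVec δ + σe2
      else if (a = 0 ∧ b = 1) ∨ (a = 1 ∧ b = 0) then c2
      else 1

lemma Mmat_eq_fromBlocks {k : ℕ} (S : Matrix (Fin k) (Fin k) ℝ) (δ : Fin k → ℝ)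
    (σe2 c2 : ℝ) :
    Mmat S δ σe2 c2 = Matrix.fromBlocks S
      (Matrix.of fun a b => if b = 0 then S.mulVec δ a else 0)
      (Matrix.of fun a b => if a = 0 then Matrix.vecMul δ S b else 0)
      !![δ ⬝ᵥ S.mulVec δ + σe2, c2; c2, 1] := by
  ext i j
  cases i with
  | inl a => cases j with
    | inl b => rfl
    | inr b => rfl
  | inr a => cases j with
    | inl b => rfl
    | inr b =>
      fin_cases a <;> fin_cases b <;>
        simp [Mmat, Matrix.fromBlocks]

lemma det_Mmat {k : ℕ} (S : Matrix (Fin k) (Fin k) ℝ) (hS : S.PosDef)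
    (δ : Fin k → ℝ) (σe2 c2 : ℝ) :
    (Mmat S δ σe2 c2).det = S.det * (σe2 - c2 ^ 2) := by
  have hSu : IsUnit S.det := isUnit_iff_ne_zero.mpr hS.det_pos.ne'
  haveI : Invertible S := S.invertibleOfIsUnitDet hSu
  rw [Mmat_eq_fromBlocks, Matrix.det_fromBlocks₁₁]
  set B : Matrix (Fin k) (Fin 2) ℝ :=
    Matrix.of fun a b => if b = 0 then S.mulVec δ a else 0 with hB
  set C : Matrix (Fin 2) (Fin k) ℝ :=
    Matrix.of fun a b => if a = 0 then Matrix.vecMul δ S b else 0 with hC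
  have hCB : C * S⁻¹ * B = !![δ ⬝ᵥ S.mulVec δ, 0; 0, 0] := by
    have hCS : C * S⁻¹ =
        Matrix.of fun a b => if a = 0 then δ b else 0 := by
      ext a b
      fin_cases a <;>
        simp [hC, Matrix.mul_apply]
      · have : ∑ c, Matrix.vecMul δ S c * S⁻¹ c b
            = Matrix.vecMul (Matrix.vecMul δ S) S⁻¹ b := rfl
        rw [this, Matrix.vecMul_vecMul, Matrix.mul_nonsing_inv _ hSu,
          Matrix.vecMul_one]
    rw [hCS]
    ext a b
    fin_cases a <;> fin_cases b <;>
      simp [hB, Matrix.mul_apply, dotProduct]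
  rw [Matrix.invOf_eq_nonsing_inv, hCB]
  have : !![δ ⬝ᵥ S.mulVec δ + σe2, c2; c2, 1] - !![δ ⬝ᵥ S.mulVec δ, 0; 0, 0]
      = !![σe2, c2; c2, 1] := by
    ext a b
    fin_cases a <;> fin_cases b <;> simp
  rw [this, Matrix.det_fin_two_of]
  ring

/-- `M` is invertible if and only if `c₂² ≠ σ_e²`. -/
theorem stmt10 {k : ℕ} (S : Matrix (Fin k) (Fin k) ℝ) (hS : S.PosDef)
    (δ : Fin k → ℝ) (σe2 c2 : ℝ) (hσ : 0 < σe2) :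
    IsUnit (Mmat S δ σe2 c2) ↔ c2 ^ 2 ≠ σe2 := by
  rw [Matrix.isUnit_iff_isUnit_det, isUnit_iff_ne_zero, det_Mmat S hS]
  constructor
  · intro h hc
    exact h (by rw [hc]; ring)
  · intro h hc
    rcases mul_eq_zero.mp hc with h1 | h2
    · exact hS.det_pos.ne' h1
    · exact h (by linarith)
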